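/- Equivalence of natural deduction derivations and the derivability relation: Γ ⊢ φ in P (defined with weakening and cut as structural rules) if and only if there exists a finite sequence φ₁,…,φₙ with φₙ=φ where each φₖ is in Γ∪{⊤} or is obtained from earlier formulas by ∧-introduction, ∧-elimination, primal →-introduction, or →-elimination. In particular, the cut rule is admissible in the sequence-based system. -/

import Mathlib

/-- Infons: formulas built from atoms, ⊤, ⊥, conjunction and primal implication. -/
inductive Infon : Type
  | atom : ℕ → Infon
  | top : Infon
  | bot : Infon
  | and : Infon → Infon → Infon
  | imp : Infon → Infon → Infon
deriving DecidableEq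

/-- Derivability in the basic primal infon logic P (⊥ is an ordinary atom, no rule for it). -/
inductive DerP : Set Infon → Infon → Prop
  | top (Γ : Set Infon) : DerP Γ .top
  | id (φ : Infon) : DerP {φ} φ
  | weak {Γ φ} (Δ : Set Infon) : DerP Γ φ → DerP (Γ ∪ Δ) φ
  | cut {Γ φ ψ} : DerP Γ φ → DerP (insert φ Γ) ψ → DerP Γ ψ
  | andI {Γ φ ψ} : DerP Γ φ → DerP Γ ψ → DerP Γ (.and φ ψ)
  | andE1 {Γ φ ψ} : DerP Γ (.and φ ψ) → DerP Γ φ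
  | andE2 {Γ φ ψ} : DerP Γ (.and φ ψ) → DerP Γ ψ
  | impI {Γ ψ} (φ : Infon) : DerP Γ ψ → DerP Γ (.imp φ ψ)
  | impE {Γ φ ψ} : DerP Γ φ → DerP Γ (.imp φ ψ) → DerP Γ ψ

/-- Derivability in P[⊥_w]: P plus the weak ⊥-elimination rule. -/
inductive DerW : Set Infon → Infon → Prop
  | top (Γ : Set Infon) : DerW Γ .top
  | id (φ : Infon) : DerW {φ} φ
  | weak {Γ φ} (Δ : Set Infon) : DerW Γ φ → DerW (Γ ∪ Δ) φ
  | cut {Γ φ ψ} : DerW Γ φ → DerW (insert φ Γ) ψ → DerW Γ ψ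
  | andI {Γ φ ψ} : DerW Γ φ → DerW Γ ψ → DerW Γ (.and φ ψ)
  | andE1 {Γ φ ψ} : DerW Γ (.and φ ψ) → DerW Γ φ
  | andE2 {Γ φ ψ} : DerW Γ (.and φ ψ) → DerW Γ ψ
  | impI {Γ ψ} (φ : Infon) : DerW Γ ψ → DerW Γ (.imp φ ψ)
  | impE {Γ φ ψ} : DerW Γ φ → DerW Γ (.imp φ ψ) → DerW Γ ψ
  | botEw {Γ φ ψ} : DerW Γ .bot → DerW Γ (.imp φ ψ) → DerW Γ ψ

/-- Positive atoms of an infon. -/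
def posAt : Infon → Set Infon
  | .and φ ψ => posAt φ ∪ posAt ψ
  | .imp _ ψ => posAt ψ
  | φ => {φ}

/-- Positive atoms of a context. -/
def posCtx (Γ : Set Infon) : Set Infon := ⋃ φ ∈ Γ, posAt φ

/-- χ may occur as the next step of a derivation sequence from Γ given the list `pre` of
previously derived infons: it is a hypothesis, ⊤, or follows by ∧I, ∧E₁, ∧E₂, →I or →E. -/
def Step (Γ : Set Infon) (pre : List Infon) (χ : Infon) : Prop :=
  χ ∈ Γ ∨ χ = .top ∨
  (∃ φ ψ, χ = .and φ ψ ∧ φ ∈ pre ∧ ψ ∈ pre) ∨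
  (∃ ψ, .and χ ψ ∈ pre) ∨ (∃ φ, .and φ χ ∈ pre) ∨
  (∃ φ ψ, χ = .imp φ ψ ∧ ψ ∈ pre) ∨
  (∃ φ, φ ∈ pre ∧ .imp φ χ ∈ pre)

def Good (Γ : Set Infon) (L : List Infon) : Prop :=
  ∀ i : Fin L.length, Step Γ (L.take i) (L.get i)

lemma step_mono {Γ : Set Infon} {pre pre' χ} (h : ∀ x ∈ pre, x ∈ pre') :
    Step Γ pre χ → Step Γ pre' χ := by
  unfold Step
  rintro (h1|h1|⟨a,b,rfl,ha,hb⟩|⟨b,hb⟩|⟨a,ha⟩|⟨a,b,rfl,hb⟩|⟨a,ha,hb⟩)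
  · exact Or.inl h1
  · exact Or.inr (Or.inl h1)
  · exact Or.inr (Or.inr (Or.inl ⟨a,b,rfl,h _ ha,h _ hb⟩))
  · exact Or.inr (Or.inr (Or.inr (Or.inl ⟨b, h _ hb⟩)))
  · exact Or.inr (Or.inr (Or.inr (Or.inr (Or.inl ⟨a, h _ ha⟩))))
  · exact Or.inr (Or.inr (Or.inr (Or.inr (Or.inr (Or.inl ⟨a,b,rfl,h _ hb⟩)))))
  · exact Or.inr (Or.inr (Or.inr (Or.inr (Or.inr (Or.inr ⟨a, h _ ha, h _ hb⟩)))))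

lemma good_append {Γ : Set Infon} {L₁ L₂} (h1 : Good Γ L₁) (h2 : Good Γ L₂) :
    Good Γ (L₁ ++ L₂) := by
  intro i
  have hi := i.isLt
  simp only [List.length_append] at hi
  rcases lt_or_ge (i : ℕ) L₁.length with h | h
  · have ht : (L₁ ++ L₂).take i = L₁.take i := by
      simp [List.take_append, Nat.sub_eq_zero_of_le h.le]
    have hg : (L₁ ++ L₂).get i = L₁[(i:ℕ)] := by
      simp [List.get_eq_getElem, List.getElem_append_left h]
    rw [ht, hg]
    exact h1 ⟨i, h⟩
  · have ht : (L₁ ++ L₂).take i = L₁ ++ L₂.take ((i:ℕ) - L₁.length) := by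
      simp [List.take_append, List.take_of_length_le h]
    have hg : (L₁ ++ L₂).get i = L₂[(i:ℕ) - L₁.length] := by
      simp [List.get_eq_getElem, List.getElem_append_right h]
    rw [ht, hg]
    refine step_mono (fun x hx => List.mem_append_right _ hx) ?_
    exact h2 ⟨(i:ℕ) - L₁.length, by omega⟩

lemma good_snoc {Γ : Set Infon} {L χ} (h1 : Good Γ L) (h2 : Step Γ L χ) :
    Good Γ (L ++ [χ]) := by
  intro i
  have hi := i.isLt
  simp only [List.length_append, List.length_singleton] at hi
  rcases lt_or_ge (i : ℕ) L.length with h | h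
  · have ht : (L ++ [χ]).take i = L.take i := by
      simp [List.take_append, Nat.sub_eq_zero_of_le h.le]
    have hg : (L ++ [χ]).get i = L[(i:ℕ)] := by
      simp [List.get_eq_getElem, List.getElem_append_left h]
    rw [ht, hg]
    exact h1 ⟨i, h⟩
  · have he : (i:ℕ) = L.length := by omega
    have ht : (L ++ [χ]).take i = L := by
      simp [he]
    have hg : (L ++ [χ]).get i = χ := by
      simp [List.get_eq_getElem, he]
    rw [ht, hg]; exact h2

inductive SeqDer (Γ : Set Infon) : Infon → Prop
  | hyp {φ} : φ ∈ Γ → SeqDer Γ φ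
  | top : SeqDer Γ .top
  | andI {φ ψ} : SeqDer Γ φ → SeqDer Γ ψ → SeqDer Γ (.and φ ψ)
  | andE1 {φ ψ} : SeqDer Γ (.and φ ψ) → SeqDer Γ φ
  | andE2 {φ ψ} : SeqDer Γ (.and φ ψ) → SeqDer Γ ψ
  | impI {ψ} (φ : Infon) : SeqDer Γ ψ → SeqDer Γ (.imp φ ψ)
  | impE {φ ψ} : SeqDer Γ φ → SeqDer Γ (.imp φ ψ) → SeqDer Γ ψ

lemma seqDer_mono {Γ Γ' : Set Infon} (hs : Γ ⊆ Γ') {φ} (h : SeqDer Γ φ) :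
    SeqDer Γ' φ := by
  induction h with
  | hyp h => exact .hyp (hs h)
  | top => exact .top
  | andI _ _ ih1 ih2 => exact .andI ih1 ih2
  | andE1 _ ih => exact .andE1 ih
  | andE2 _ ih => exact .andE2 ih
  | impI φ _ ih => exact .impI φ ih
  | impE _ _ ih1 ih2 => exact .impE ih1 ih2

lemma seqDer_cut {Γ : Set Infon} {φ ψ} (h1 : SeqDer Γ φ)
    (h2 : SeqDer (insert φ Γ) ψ) : SeqDer Γ ψ := by
  induction h2 with
  | hyp h => rcases h with rfl | h; exact h1; exact .hyp h
  | top => exact .top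
  | andI _ _ ih1 ih2 => exact .andI ih1 ih2
  | andE1 _ ih => exact .andE1 ih
  | andE2 _ ih => exact .andE2 ih
  | impI φ _ ih => exact .impI φ ih
  | impE _ _ ih1 ih2 => exact .impE ih1 ih2

lemma derP_iff_seqDer {Γ : Set Infon} {φ} : DerP Γ φ ↔ SeqDer Γ φ := by
  constructor
  · intro h
    induction h with
    | top => exact .top
    | id φ => exact .hyp rfl
    | weak Δ _ ih => exact seqDer_mono Set.subset_union_left ih
    | cut _ _ ih1 ih2 => exact seqDer_cut ih1 ih2
    | andI _ _ ih1 ih2 => exact .andI ih1 ih2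
    | andE1 _ ih => exact .andE1 ih
    | andE2 _ ih => exact .andE2 ih
    | impI φ _ ih => exact .impI φ ih
    | impE _ _ ih1 ih2 => exact .impE ih1 ih2
  · intro h
    induction h with
    | @hyp χ h =>
      have : ({χ} ∪ Γ : Set Infon) = Γ := by
        rw [Set.singleton_union, Set.insert_eq_self]; exact h
      exact this ▸ DerP.weak Γ (DerP.id χ)
    | top => exact .top Γ
    | andI _ _ ih1 ih2 => exact .andI ih1 ih2
    | andE1 _ ih => exact .andE1 ih
    | andE2 _ ih => exact .andE2 ih
    | impI φ _ ih => exact .impI φ ih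
    | impE _ _ ih1 ih2 => exact .impE ih1 ih2


lemma mem_of_getLast?' {L : List Infon} {φ} (h : L.getLast? = some φ) : φ ∈ L := by
  cases L with
  | nil => simp at h
  | cons a l =>
    rw [List.getLast?_eq_getLast (by simp)] at h
    obtain rfl := Option.some.inj h
    exact List.getLast_mem _

lemma seqDer_to_list {Γ : Set Infon} {φ} (h : SeqDer Γ φ) :
    ∃ L, Good Γ L ∧ L.getLast? = some φ := by
  induction h with
  | @hyp χ h =>
    refine ⟨[χ], fun i => ?_, rfl⟩
    have h1 : (i : ℕ) < 1 := by simp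
    have : i = ⟨0, by simp⟩ := Fin.ext (by simp [Nat.lt_one_iff.mp h1])
    subst this
    exact Or.inl h
  | top =>
    refine ⟨[.top], fun i => ?_, rfl⟩
    have h1 : (i : ℕ) < 1 := by simp
    have : i = ⟨0, by simp⟩ := Fin.ext (by simp [Nat.lt_one_iff.mp h1])
    subst this
    exact Or.inr (Or.inl rfl)
  | @andI φ ψ _ _ ih1 ih2 =>
    obtain ⟨L1, g1, l1⟩ := ih1
    obtain ⟨L2, g2, l2⟩ := ih2
    refine ⟨L1 ++ L2 ++ [.and φ ψ], good_snoc (good_append g1 g2) ?_,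
      List.getLast?_concat⟩
    exact Or.inr (Or.inr (Or.inl ⟨φ, ψ, rfl,
      List.mem_append_left _ (mem_of_getLast?' l1),
      List.mem_append_right _ (mem_of_getLast?' l2)⟩))
  | @andE1 φ ψ _ ih =>
    obtain ⟨L1, g1, l1⟩ := ih
    exact ⟨L1 ++ [φ], good_snoc g1 (Or.inr (Or.inr (Or.inr (Or.inl
      ⟨ψ, mem_of_getLast?' l1⟩)))), List.getLast?_concat⟩
  | @andE2 φ ψ _ ih =>
    obtain ⟨L1, g1, l1⟩ := ih
    exact ⟨L1 ++ [ψ], good_snoc g1 (Or.inr (Or.inr (Or.inr (Or.inr (Or.inl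
      ⟨φ, mem_of_getLast?' l1⟩))))), List.getLast?_concat⟩
  | @impI ψ φ _ ih =>
    obtain ⟨L1, g1, l1⟩ := ih
    exact ⟨L1 ++ [.imp φ ψ], good_snoc g1 (Or.inr (Or.inr (Or.inr (Or.inr (Or.inr
      (Or.inl ⟨φ, ψ, rfl, mem_of_getLast?' l1⟩)))))), List.getLast?_concat⟩
  | @impE φ ψ _ _ ih1 ih2 =>
    obtain ⟨L1, g1, l1⟩ := ih1
    obtain ⟨L2, g2, l2⟩ := ih2
    refine ⟨L1 ++ L2 ++ [ψ], good_snoc (good_append g1 g2) ?_,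
      List.getLast?_concat⟩
    exact Or.inr (Or.inr (Or.inr (Or.inr (Or.inr (Or.inr
      ⟨φ, List.mem_append_left _ (mem_of_getLast?' l1),
        List.mem_append_right _ (mem_of_getLast?' l2)⟩)))))

lemma good_all {Γ : Set Infon} {L} (hG : Good Γ L) :
    ∀ i (h : i < L.length), SeqDer Γ L[i] := by
  intro i
  induction i using Nat.strong_induction_on with
  | _ i IH =>
    intro h
    have hs := hG ⟨i, h⟩
    have hpre : ∀ x ∈ L.take i, SeqDer Γ x := by
      intro x hx
      obtain ⟨j, hj, rfl⟩ := List.mem_iff_getElem.mp hx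
      have hj' : j < i := lt_of_lt_of_le hj (by simp)
      rw [List.getElem_take]
      exact IH j hj' _
    simp only [List.get_eq_getElem] at hs
    rcases hs with h1|h1|⟨a,b,he,ha,hb⟩|⟨b,hb⟩|⟨a,ha⟩|⟨a,b,he,hb⟩|⟨a,ha,hb⟩
    · exact .hyp h1
    · exact h1 ▸ SeqDer.top
    · exact he ▸ SeqDer.andI (hpre _ ha) (hpre _ hb)
    · exact .andE1 (hpre _ hb)
    · exact .andE2 (hpre _ ha)
    · exact he ▸ SeqDer.impI a (hpre _ hb)
    · exact .impE (hpre _ ha) (hpre _ hb)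

/-- Γ ⊢ φ in P (with weakening and cut) iff there is a derivation sequence of φ from Γ,
where each entry is a hypothesis, ⊤, or follows from earlier entries by the ∧- and
primal →-rules. In particular, cut is admissible in the sequence-based system. -/
theorem derP_iff_derivation_sequence (Γ : Set Infon) (φ : Infon) :
    DerP Γ φ ↔
    ∃ L : List Infon,
      (∀ i : Fin L.length, Step Γ (L.take i) (L.get i)) ∧
      L.getLast? = some φ := by
  constructor
  · intro h
    obtain ⟨L, hG, hl⟩ := seqDer_to_list (derP_iff_seqDer.mp h)
    exact ⟨L, hG, hl⟩
  · rintro ⟨L, hG, hl⟩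
    obtain ⟨i, hi, rfl⟩ := List.mem_iff_getElem.mp (mem_of_getLast?' hl)
    exact derP_iff_seqDer.mpr (good_all hG i hi)
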